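/- Let an unambiguous complete product basis be given and let w : ∏_k A_k → ∏_k X_k be the unique induced function (w(a^j) = x^j for every event j). Then w is non-self-signaling: for every party k, every a_{∖k} ∈ ∏_{j≠k} A_j, and all a_k, a'_k ∈ A_k, the X_k-component of w satisfies w_k(a_k, a_{∖k}) = w_k(a'_k, a_{∖k}). -/

import Mathlib

noncomputable section
open scoped BigOperators

/-- **Non-self-signaling of the induced function**: the unique function `w`
induced by an unambiguous complete product basis (i.e. satisfying
`w(aʲ) = xʲ` for every event `j`) is non-self-signaling: its `k`-th component
does not depend on the `k`-th party's outcome. -/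
theorem unambiguous_basis_induced_function_nonSelfSignaling
    -- `n` parties with local dimensions `d k`
    {n : ℕ} (hn : 1 ≤ n) (d : Fin n → ℕ) (hd : ∀ k, 1 ≤ d k)
    -- outcome sets `A k` with `|A k| = d k`, finite nonempty setting sets `X k`
    (A : Fin n → Type) [∀ k, Fintype (A k)] [∀ k, DecidableEq (A k)]
    (hA : ∀ k, Fintype.card (A k) = d k)
    (X : Fin n → Type) [∀ k, Fintype (X k)] [∀ k, Nonempty (X k)]
    [∀ k, DecidableEq (X k)]
    -- local vectors `|(a_k|x_k)⟩`, an orthonormal basis for each setting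
    (v : ∀ k : Fin n, X k → A k → EuclideanSpace ℂ (Fin (d k)))
    (hv : ∀ (k : Fin n) (x : X k), Orthonormal ℂ (v k x))
    -- `N = ∏_k d_k` pairwise distinct events with pairwise orthogonal
    -- product vectors (a complete product basis)
    {N : ℕ} (hN : N = ∏ k, d k)
    (e : Fin N → (∀ k, A k) × (∀ k, X k))
    (he : Function.Injective e)
    (horth : ∀ j j' : Fin N, j ≠ j' →
      (∏ k : Fin n,
        (inner ℂ (v k ((e j).2 k) ((e j).1 k))
          (v k ((e j').2 k) ((e j').1 k)) : ℂ)) = 0)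
    -- unambiguity: for labels occurring among the events, two distinct local
    -- vectors are orthogonal iff they belong to the same setting
    (hunamb : ∀ (k : Fin n) (a a' : A k) (x x' : X k),
      (∃ j, (e j).1 k = a ∧ (e j).2 k = x) →
      (∃ j, (e j).1 k = a' ∧ (e j).2 k = x') →
      v k x a ≠ v k x' a' →
      ((inner ℂ (v k x a) (v k x' a') : ℂ) = 0 ↔ x = x'))
    -- `w` is the induced function of the basis
    (w : (∀ k, A k) → ∀ k, X k)
    (hw : ∀ j : Fin N, w ((e j).1) = (e j).2) :
    ∀ (k : Fin n) (a a' : ∀ j, A j),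
      (∀ j : Fin n, j ≠ k → a j = a' j) → w a k = w a' k := by
  classical
  -- outcomes map is injective
  have hfinj : Function.Injective (fun j : Fin N => (e j).1) := by
    intro j j' h
    simp only at h
    apply he
    have h2 : (e j).2 = (e j').2 := by rw [← hw j, ← hw j', h]
    exact Prod.ext h h2
  have hcard : Fintype.card (Fin N) = Fintype.card (∀ k, A k) := by
    simp [Fintype.card_pi, hA, hN]
  have hsurj : Function.Surjective (fun j : Fin N => (e j).1) :=
    ((Fintype.bijective_iff_injective_and_card _).mpr ⟨hfinj, hcard⟩).2
  intro k a a' hagree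
  by_cases haa : a = a'
  · rw [haa]
  obtain ⟨j, hj⟩ := hsurj a
  obtain ⟨j', hj'⟩ := hsurj a'
  simp only at hj hj'
  have hne : j ≠ j' := fun h => haa (by rw [← hj, ← hj', h])
  have hwa : w a = (e j).2 := by rw [← hj, hw]
  have hwa' : w a' = (e j').2 := by rw [← hj', hw]
  by_contra hx
  have hprod := horth j j' hne
  rw [Finset.prod_eq_zero_iff] at hprod
  obtain ⟨m, -, hm⟩ := hprod
  have hone : ∀ (p : Fin n) (x : X p) (b : A p),
      (inner ℂ (v p x b) (v p x b) : ℂ) = 1 := by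
    intro p x b
    have := orthonormal_iff_ite.mp (hv p x) b b
    simpa using this
  by_cases hmk : m = k
  · subst hmk
    have hev : ∃ j0, (e j0).1 m = (e j).1 m ∧ (e j0).2 m = (e j).2 m := ⟨j, rfl, rfl⟩
    have hev' : ∃ j0, (e j0).1 m = (e j').1 m ∧ (e j0).2 m = (e j').2 m := ⟨j', rfl, rfl⟩
    by_cases hveq : v m ((e j).2 m) ((e j).1 m) = v m ((e j').2 m) ((e j').1 m)
    · rw [hveq, hone] at hm
      exact one_ne_zero hm
    · have := (hunamb m ((e j).1 m) ((e j').1 m) ((e j).2 m) ((e j').2 m)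
        hev hev' hveq).mp hm
      apply hx
      rw [hwa, hwa', this]
  · have hout : (e j).1 m = (e j').1 m := by
      rw [hj, hj']; exact hagree m hmk
    by_cases hveq : v m ((e j).2 m) ((e j).1 m) = v m ((e j').2 m) ((e j').1 m)
    · rw [hveq, hone] at hm
      exact one_ne_zero hm
    · have hxeq := (hunamb m ((e j).1 m) ((e j').1 m) ((e j).2 m) ((e j').2 m)
        ⟨j, rfl, rfl⟩ ⟨j', rfl, rfl⟩ hveq).mp hm
      apply hveq
      rw [hxeq, hout]

end
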